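/- For the scheme K_{n_1} ≀ K_{n_2} ≀ ⋯ ≀ K_{n_d} and all indices i, j, h with 1 ≤ i < j < h ≤ d, one has the matrix identity A_i E_h^* A_j = (n_i − 1)(∏_{k=1}^{i−1} n_k) · E_h^* A_j E_h^*. -/

import Mathlib

open scoped Classical

noncomputable section

/-- Relation `R i` of the wreath product scheme `K_{n 1} ≀ ⋯ ≀ K_{n d}`
(coordinates 0-indexed): `R 0` is the identity relation; for `1 ≤ i ≤ d`,
`(x, y) ∈ R i` iff coordinate `i - 1` is the largest coordinate where `x`
and `y` differ. -/
def wRel (d : ℕ) (n : Fin d → ℕ) (i : ℕ) (x y : ∀ k : Fin d, Fin (n k)) : Prop :=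
  if h : 1 ≤ i ∧ i ≤ d then
    x ⟨i - 1, by omega⟩ ≠ y ⟨i - 1, by omega⟩ ∧
      ∀ k : Fin d, i - 1 < (k : ℕ) → x k = y k
  else x = y

/-- Adjacency matrix `A i`. -/
def wA (d : ℕ) (n : Fin d → ℕ) (i : ℕ) :
    Matrix (∀ k : Fin d, Fin (n k)) (∀ k : Fin d, Fin (n k)) ℂ :=
  Matrix.of fun x y => if wRel d n i x y then 1 else 0

/-- The base vertex `(1, 1, …, 1)` (0-indexed: all coordinates `0`). -/
def wBase (d : ℕ) (n : Fin d → ℕ) (hn : ∀ k, 2 ≤ n k) : ∀ k : Fin d, Fin (n k) :=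
  fun k => ⟨0, by have := hn k; omega⟩

/-- Dual idempotent `E_i^*` with respect to the base vertex. -/
def wE (d : ℕ) (n : Fin d → ℕ) (hn : ∀ k, 2 ≤ n k) (i : ℕ) :
    Matrix (∀ k : Fin d, Fin (n k)) (∀ k : Fin d, Fin (n k)) ℂ :=
  Matrix.of fun y z => if y = z ∧ wRel d n i (wBase d n hn) y then 1 else 0

/-- `T₀`: the linear span of the triple products `E_i^* A_j E_h^*`. -/
def wT0 (d : ℕ) (n : Fin d → ℕ) (hn : ∀ k, 2 ≤ n k) :
    Submodule ℂ (Matrix (∀ k : Fin d, Fin (n k)) (∀ k : Fin d, Fin (n k)) ℂ) :=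
  Submodule.span ℂ
    {M | ∃ i j h : ℕ, i ≤ d ∧ j ≤ d ∧ h ≤ d ∧
      M = wE d n hn i * wA d n j * wE d n hn h}

/-- The Terwilliger algebra: the unital subalgebra generated by the `A i`
and the `E_i^*`. -/
def wT (d : ℕ) (n : Fin d → ℕ) (hn : ∀ k, 2 ≤ n k) :
    Subalgebra ℂ (Matrix (∀ k : Fin d, Fin (n k)) (∀ k : Fin d, Fin (n k)) ℂ) :=
  Algebra.adjoin ℂ
    ({M | ∃ i ≤ d, M = wA d n i} ∪ {M | ∃ i ≤ d, M = wE d n hn i})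

section Helpers

variable {d : ℕ} {n : Fin d → ℕ} {hn : ∀ k, 2 ≤ n k}

lemma wRel_iff {i : ℕ} (hi : 1 ≤ i) (hid : i ≤ d) (x y : ∀ k : Fin d, Fin (n k)) :
    wRel d n i x y ↔ (x ⟨i - 1, by omega⟩ ≠ y ⟨i - 1, by omega⟩ ∧
      ∀ k : Fin d, i - 1 < (k : ℕ) → x k = y k) := by
  rw [wRel, dif_pos ⟨hi, hid⟩]

lemma wE_mul (h : ℕ) (M : Matrix (∀ k : Fin d, Fin (n k)) (∀ k : Fin d, Fin (n k)) ℂ)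
    (x y : ∀ k : Fin d, Fin (n k)) :
    (wE d n hn h * M) x y = if wRel d n h (wBase d n hn) x then M x y else 0 := by
  simp [Matrix.mul_apply, wE, ite_and, ite_mul, Finset.sum_ite_eq]

lemma mul_wE (h : ℕ) (M : Matrix (∀ k : Fin d, Fin (n k)) (∀ k : Fin d, Fin (n k)) ℂ)
    (x y : ∀ k : Fin d, Fin (n k)) :
    (M * wE d n hn h) x y = if wRel d n h (wBase d n hn) y then M x y else 0 := by
  simp [Matrix.mul_apply, wE, ite_and, mul_ite, Finset.sum_ite_eq']

lemma wCount (i : ℕ) (hi1 : 1 ≤ i) (hid : i ≤ d) (x : ∀ k : Fin d, Fin (n k))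
    (hn : ∀ k, 2 ≤ n k) :
    ((Finset.univ.filter (fun z : ∀ k : Fin d, Fin (n k) =>
        z ⟨i - 1, by omega⟩ ≠ x ⟨i - 1, by omega⟩ ∧
        ∀ k : Fin d, i - 1 < (k : ℕ) → z k = x k)).card : ℂ) =
      ((n ⟨i - 1, by omega⟩ : ℂ) - 1) *
        ∏ l ∈ Finset.univ.filter (fun l : Fin d => (l : ℕ) < i - 1), (n l : ℂ) := by
  classical
  set t : ∀ k : Fin d, Finset (Fin (n k)) := fun k =>
    if (k : ℕ) = i - 1 then {x k}ᶜ else if (k : ℕ) < i - 1 then Finset.univ else {x k} with ht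
  have hmem : Finset.univ.filter (fun z : ∀ k : Fin d, Fin (n k) =>
        z ⟨i - 1, by omega⟩ ≠ x ⟨i - 1, by omega⟩ ∧
        ∀ k : Fin d, i - 1 < (k : ℕ) → z k = x k) = Fintype.piFinset t := by
    ext z
    simp only [Finset.mem_filter, Finset.mem_univ, true_and, Fintype.mem_piFinset, ht]
    constructor
    · rintro ⟨h1, h2⟩ k
      by_cases hk : (k : ℕ) = i - 1
      · have hke : k = ⟨i - 1, by omega⟩ := Fin.ext hk
        rw [hke]
        simpa using h1
      · by_cases hk2 : (k : ℕ) < i - 1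
        · simp [hk, hk2]
        · have := h2 k (by omega)
          simp [hk, hk2, this]
    · intro hz
      constructor
      · have := hz ⟨i - 1, by omega⟩
        simpa using this
      · intro k hk
        have := hz k
        rw [if_neg (by omega), if_neg (by omega)] at this
        simpa using this
  rw [hmem, Fintype.card_piFinset, Nat.cast_prod]
  have hcard : ∀ k : Fin d, ((t k).card : ℂ) =
      if (k : ℕ) = i - 1 then (n k : ℂ) - 1 else if (k : ℕ) < i - 1 then (n k : ℂ) else 1 := by
    intro k
    rw [ht]
    by_cases hk : (k : ℕ) = i - 1
    · have h1 : 1 ≤ n k := by have := hn k; omega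
      simp [hk, Finset.card_compl, Nat.cast_sub h1]
    · by_cases hk2 : (k : ℕ) < i - 1
      · simp [hk, hk2]
      · simp [hk, hk2]
  rw [Finset.prod_congr rfl (fun k _ => hcard k)]
  rw [← Finset.prod_filter_mul_prod_filter_not Finset.univ (fun k : Fin d => (k : ℕ) = i - 1)]
  have hsing : Finset.univ.filter (fun k : Fin d => (k : ℕ) = i - 1) = {⟨i - 1, by omega⟩} := by
    ext k; simp [Fin.ext_iff]
  congr 1
  · rw [hsing, Finset.prod_singleton, if_pos rfl]
  · rw [Finset.prod_congr rfl (fun k hk => by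
      rw [if_neg (by simpa using (Finset.mem_filter.mp hk).2)]),
      ← Finset.prod_filter, Finset.filter_filter]
    apply Finset.prod_congr _ (fun _ _ => rfl)
    apply Finset.filter_congr
    intro k _
    exact ⟨fun h => h.2, fun h => ⟨by omega, h⟩⟩

end Helpers

/-- For the scheme `K_{n_1} ≀ ⋯ ≀ K_{n_d}` and indices with
`1 ≤ i < j < h ≤ d`,
`A_i E_h^* A_j = (n_i - 1)(∏_{k=1}^{i-1} n_k) E_h^* A_j E_h^*`. -/
theorem AEA_below_wreath (d : ℕ) (hd : 1 ≤ d) (n : Fin d → ℕ) (hn : ∀ k, 2 ≤ n k)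
    (i j h : ℕ) (hi1 : 1 ≤ i) (hij : i < j) (hjh : j < h) (hhd : h ≤ d) :
    wA d n i * wE d n hn h * wA d n j =
      (((n ⟨i - 1, by omega⟩ : ℂ) - 1) *
          ∏ l ∈ Finset.univ.filter (fun l : Fin d => (l : ℕ) < i - 1), (n l : ℂ)) •
        (wE d n hn h * wA d n j * wE d n hn h) := by
  classical
  have hid : i ≤ d := by omega
  have hjd : j ≤ d := by omega
  have hj1 : 1 ≤ j := by omega
  have hh1 : 1 ≤ h := by omega
  have hij1 : i - 1 < j - 1 := by omega
  have hjh1 : j - 1 < h - 1 := by omega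
  set base := wBase d n hn with hbase
  ext x y
  rw [Matrix.smul_apply, smul_eq_mul, mul_wE, wE_mul, Matrix.mul_apply]
  have hL : (∑ z, (wA d n i * wE d n hn h) x z * wA d n j z y) =
      ((Finset.univ.filter (fun z : ∀ k : Fin d, Fin (n k) =>
        wRel d n i x z ∧ wRel d n h base z ∧ wRel d n j z y)).card : ℂ) := by
    rw [← Finset.sum_boole]
    refine Finset.sum_congr rfl fun z _ => ?_
    rw [mul_wE]
    by_cases h1 : wRel d n i x z <;> by_cases h2 : wRel d n h base z <;>
      by_cases h3 : wRel d n j z y <;> simp [wA, h1, h2, h3, ← hbase]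
  rw [hL]
  by_cases hC : wRel d n h base x ∧ wRel d n j x y ∧ wRel d n h base y
  · obtain ⟨hCx, hCxy, hCy⟩ := hC
    have hfe : Finset.univ.filter (fun z : ∀ k : Fin d, Fin (n k) =>
        wRel d n i x z ∧ wRel d n h base z ∧ wRel d n j z y) =
        Finset.univ.filter (fun z : ∀ k : Fin d, Fin (n k) =>
        z ⟨i - 1, by omega⟩ ≠ x ⟨i - 1, by omega⟩ ∧
        ∀ k : Fin d, i - 1 < (k : ℕ) → z k = x k) := by
      apply Finset.filter_congr
      intro z _
      constructor
      · rintro ⟨h1, _, _⟩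
        obtain ⟨h1a, h1b⟩ := (wRel_iff hi1 hid x z).mp h1
        exact ⟨fun e => h1a e.symm, fun k hk => (h1b k hk).symm⟩
      · rintro ⟨h1a, h1b⟩
        obtain ⟨hxa, hxb⟩ := (wRel_iff hh1 hhd base x).mp hCx
        obtain ⟨hya, hyb⟩ := (wRel_iff hj1 hjd x y).mp hCxy
        refine ⟨(wRel_iff hi1 hid x z).mpr ⟨fun e => h1a e.symm, fun k hk => (h1b k hk).symm⟩,
          (wRel_iff hh1 hhd base z).mpr ⟨?_, ?_⟩,
          (wRel_iff hj1 hjd z y).mpr ⟨?_, ?_⟩⟩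
        · have hz : z ⟨h - 1, by omega⟩ = x ⟨h - 1, by omega⟩ :=
            h1b ⟨h - 1, by omega⟩ (by simpa using by omega)
          rw [hz]
          exact hxa
        · intro k hk
          rw [hxb k hk, ← h1b k (by omega)]
        · have hz : z ⟨j - 1, by omega⟩ = x ⟨j - 1, by omega⟩ :=
            h1b ⟨j - 1, by omega⟩ (by simpa using by omega)
          rw [hz]
          exact hya
        · intro k hk
          rw [h1b k (by omega), hyb k hk]
    rw [hfe, wCount i hi1 hid x hn]
    simp [wA, hCx, hCxy, hCy, ← hbase]
  · have he : Finset.univ.filter (fun z : ∀ k : Fin d, Fin (n k) =>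
        wRel d n i x z ∧ wRel d n h base z ∧ wRel d n j z y) = ∅ := by
      rw [Finset.filter_eq_empty_iff]
      rintro z _ ⟨h1, h2, h3⟩
      obtain ⟨h1a, h1b⟩ := (wRel_iff hi1 hid x z).mp h1
      obtain ⟨h2a, h2b⟩ := (wRel_iff hh1 hhd base z).mp h2
      obtain ⟨h3a, h3b⟩ := (wRel_iff hj1 hjd z y).mp h3
      refine hC ⟨(wRel_iff hh1 hhd base x).mpr ⟨?_, ?_⟩,
        (wRel_iff hj1 hjd x y).mpr ⟨?_, ?_⟩,
        (wRel_iff hh1 hhd base y).mpr ⟨?_, ?_⟩⟩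
      · have := h1b ⟨h - 1, by omega⟩ (by simpa using by omega)
        rw [this]
        exact h2a
      · intro k hk
        rw [h2b k hk, ← h1b k (by omega)]
      · have := h1b ⟨j - 1, by omega⟩ (by simpa using by omega)
        rw [this]
        exact h3a
      · intro k hk
        rw [h1b k (by omega), h3b k hk]
      · have := h3b ⟨h - 1, by omega⟩ (by simpa using by omega)
        rw [← this]
        exact h2a
      · intro k hk
        rw [h2b k hk, h3b k (by omega)]
    rw [he]
    push_neg at hC
    by_cases c1 : wRel d n h base x <;> by_cases c2 : wRel d n j x y <;>
      by_cases c3 : wRel d n h base y <;> simp [wA, c1, c2, c3] <;> tauto
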